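/- For every integer n ≥ 2 and every real number t with t ≤ 1/2, α_n·(β_n + t) < 7/24. -/
import Mathlib


/-- `α_n = (√(3n²+1) − (n+1)) / (3(n−1))`. -/
noncomputable def alph (n : ℕ) : ℝ :=
  (Real.sqrt (3 * (n : ℝ) ^ 2 + 1) - ((n : ℝ) + 1)) / (3 * ((n : ℝ) - 1))

/-- `β_n = (√(3n²+1) − (n−1)) / (2n)`. -/
noncomputable def beta (n : ℕ) : ℝ :=
  (Real.sqrt (3 * (n : ℝ) ^ 2 + 1) - ((n : ℝ) - 1)) / (2 * (n : ℝ))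

theorem stmt_12 (n : ℕ) (hn : 2 ≤ n) (t : ℝ) (ht : t ≤ 1 / 2) :
    alph n * (beta n + t) < 7 / 24 := by
  have hm : (2 : ℝ) ≤ (n : ℝ) := by exact_mod_cast hn
  set m : ℝ := (n : ℝ) with hmdef
  have h0 : (0 : ℝ) ≤ 3 * m ^ 2 + 1 := by positivity
  set x := Real.sqrt (3 * m ^ 2 + 1) with hxdef
  have hx : x ^ 2 = 3 * m ^ 2 + 1 := Real.sq_sqrt h0
  have hxpos : 0 ≤ x := Real.sqrt_nonneg _
  have hxgt : m + 1 < x := by nlinarith [hx, hxpos, hm]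
  have hxgt2 : (5 * m + 3) / 4 < x := by nlinarith [hx, hxpos, hm]
  have hden : m - 1 > 0 := by linarith
  have hmne : m ≠ 0 := by linarith
  have hdne : m - 1 ≠ 0 := ne_of_gt hden
  have halpha : 0 < alph n := by
    unfold alph
    rw [← hmdef, ← hxdef]
    apply div_pos <;> linarith
  have key : alph n * (beta n + 1 / 2) = (3 * m - 1 - x) / (6 * (m - 1)) := by
    unfold alph beta
    rw [← hmdef, ← hxdef]
    field_simp
    ring_nf
    nlinarith [hx]
  have hfin : alph n * (beta n + 1 / 2) < 7 / 24 := by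
    rw [key, div_lt_iff₀ (by linarith : (0:ℝ) < 6 * (m - 1))]
    nlinarith [hxgt2, hm]
  calc alph n * (beta n + t) ≤ alph n * (beta n + 1 / 2) := by
        apply mul_le_mul_of_nonneg_left (by linarith) (le_of_lt halpha)
    _ < 7 / 24 := hfin
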